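/- Let F = x + F₂ + F₃ + F₄ and G = z + G₂ + ⋯ + G₆ with Fᵢ, Gᵢ ∈ ℂ[x,y,z] homogeneous of degree i. Suppose F₄ = h⁴, G₆ = αh⁶ and G₅ = (3/2)αh²F₃ + βh⁵, where h ≠ 0 is homogeneous of degree 1, α ∈ ℂ with α ≠ 0, and β ∈ ℂ. If deg[F,G] < 8, then there exist a homogeneous polynomial F̃₂ of degree 2 and a ∈ ℂ such that F₃ = h·F̃₂, G₅ = (3/2)αh³F̃₂ + βh⁵, and G₄ = (3/8)α·F̃₂² + (5/4)β·h²·F̃₂ + (3/2)α·h²·F₂ + (1/4)a·h⁴. -/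

import Mathlib

open MvPolynomial

noncomputable def jacMinor (f g : MvPolynomial (Fin 3) ℂ) (i j : Fin 3) :
    MvPolynomial (Fin 3) ℂ :=
  pderiv i f * pderiv j g - pderiv j f * pderiv i g

lemma coeff_pderiv (i : Fin 3) (f : MvPolynomial (Fin 3) ℂ) (m : Fin 3 →₀ ℕ) :
    coeff m (pderiv i f) = ((m i : ℂ) + 1) * coeff (m + Finsupp.single i 1) f := by
  induction f using MvPolynomial.induction_on' with
  | add p q hp hq => simp [hp, hq, mul_add]
  | monomial u a =>
    rw [pderiv_monomial]
    by_cases hu : u = m + Finsupp.single i 1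
    · subst hu
      rw [coeff_monomial, coeff_monomial, if_pos rfl, if_pos (by simp)]
      push_cast [Finsupp.add_apply, Finsupp.single_eq_same]
      ring
    · rw [coeff_monomial, coeff_monomial, if_neg hu]
      by_cases hum : u - Finsupp.single i 1 = m
      · rw [if_pos hum]
        have hui : u i = 0 := by
          by_contra hne
          apply hu
          ext k
          by_cases hk : k = i
          · subst hk
            have := congrFun (congrArg (fun (g : Fin 3 →₀ ℕ) => (g : Fin 3 → ℕ)) hum) k
            simp only [Finsupp.tsub_apply, Finsupp.single_eq_same] at this ⊢
            simp [Finsupp.add_apply, Finsupp.single_eq_same]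
            omega
          · have := congrFun (congrArg (fun (g : Fin 3 →₀ ℕ) => (g : Fin 3 → ℕ)) hum) k
            simp only [Finsupp.tsub_apply, Finsupp.single_eq_of_ne hk] at this ⊢
            simp [Finsupp.add_apply, Finsupp.single_eq_of_ne hk]
            omega
        simp [hui]
      · rw [if_neg hum, mul_zero]

lemma degree_eq_sum_univ (d : Fin 3 →₀ ℕ) : d.degree = ∑ k : Fin 3, d k := by
  rw [Finsupp.degree]
  exact Finset.sum_subset (Finset.subset_univ _)
    (fun x _ hx => Finsupp.notMem_support_iff.mp hx)

lemma isHomogeneous_of_coeff {f : MvPolynomial (Fin 3) ℂ} {n : ℕ}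
    (h : ∀ d : Fin 3 →₀ ℕ, coeff d f ≠ 0 → d.degree = n) : f.IsHomogeneous n := by
  intro d hd
  rw [show (Finsupp.weight 1 : (Fin 3 →₀ ℕ) →+ ℕ) = Finsupp.weight (fun _ => 1) from rfl,
    ← Finsupp.degree_eq_weight_one]
  exact h d hd

lemma mypderiv_comm (i j : Fin 3) (f : MvPolynomial (Fin 3) ℂ) :
    pderiv i (pderiv j f) = pderiv j (pderiv i f) := by
  ext m
  simp only [coeff_pderiv, Finsupp.add_apply]
  by_cases hij : i = j
  · subst hij; ring_nf
  · rw [Finsupp.single_eq_of_ne (Ne.symm hij), Finsupp.single_eq_of_ne hij]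
    rw [add_right_comm m (Finsupp.single i 1) (Finsupp.single j 1)]
    ring

lemma pderiv_isHomogeneous {f : MvPolynomial (Fin 3) ℂ} {n : ℕ} (hf : f.IsHomogeneous n)
    (i : Fin 3) : (pderiv i f).IsHomogeneous (n - 1) := by
  apply isHomogeneous_of_coeff
  intro d hd
  rw [coeff_pderiv] at hd
  have h2 : coeff (d + Finsupp.single i 1) f ≠ 0 := by
    intro h0; rw [h0, mul_zero] at hd; exact hd rfl
  have h3 : (d + Finsupp.single i 1).degree = n := by
    by_contra hne
    exact h2 (hf.coeff_eq_zero hne)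
  have h4 : (d + Finsupp.single i 1).degree = d.degree + 1 := by
    rw [degree_eq_sum_univ, degree_eq_sum_univ]
    simp only [Finsupp.add_apply]
    rw [Finset.sum_add_distrib]
    congr 1
    simp [Finsupp.single_apply, Finset.sum_ite_eq']
  omega

lemma euler {f : MvPolynomial (Fin 3) ℂ} {n : ℕ} (hf : f.IsHomogeneous n) :
    ∑ k : Fin 3, X k * pderiv k f = C (n : ℂ) * f := by
  ext m
  rw [coeff_C_mul, coeff_sum]
  simp only [coeff_X_mul']
  rw [← Finset.sum_filter]
  have hfilter : Finset.univ.filter (fun k => k ∈ m.support) = m.support := by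
    ext k; simp
  rw [hfilter]
  have hterm : ∀ k ∈ m.support,
      coeff (m - Finsupp.single k 1) (pderiv k f) = (m k : ℂ) * coeff m f := by
    intro k hk
    have hk1 : 1 ≤ m k := Nat.one_le_iff_ne_zero.mpr (Finsupp.mem_support_iff.mp hk)
    rw [coeff_pderiv]
    have h1 : m - Finsupp.single k 1 + Finsupp.single k 1 = m := by
      ext l
      simp only [Finsupp.add_apply, Finsupp.tsub_apply, Finsupp.single_apply]
      by_cases hl : k = l
      · subst hl; simpa using Nat.sub_add_cancel hk1
      · simp [hl]
    rw [h1]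
    have h2 : ((m - Finsupp.single k 1 : Fin 3 →₀ ℕ)) k = m k - 1 := by
      rw [Finsupp.tsub_apply, Finsupp.single_eq_same]
    rw [h2]
    have : ((m k - 1 : ℕ) : ℂ) + 1 = (m k : ℂ) := by
      have := Nat.cast_sub (R := ℂ) hk1
      rw [this]; push_cast; ring
    rw [this]
  rw [Finset.sum_congr rfl hterm, ← Finset.sum_mul]
  by_cases hc : coeff m f = 0
  · simp [hc]
  · have hdeg : m.degree = n := by
      by_contra hne
      exact hc (hf.coeff_eq_zero hne)
    rw [← hdeg, Finsupp.degree_apply]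
    push_cast
    ring

lemma homog_zero_eq_C {f : MvPolynomial (Fin 3) ℂ} (hf : f.IsHomogeneous 0) :
    f = C (coeff 0 f) := by
  ext m
  by_cases hm : m = 0
  · subst hm; simp
  · rw [hf.coeff_eq_zero (by simpa [Finsupp.degree_eq_zero_iff] using hm)]
    rw [coeff_C, if_neg (Ne.symm hm)]

lemma pderiv_hom1 {q : MvPolynomial (Fin 3) ℂ} (hq : q.IsHomogeneous 1) (k : Fin 3) :
    pderiv k q = C (coeff (Finsupp.single k 1) q) := by
  have h0 := pderiv_isHomogeneous hq k
  rw [homog_zero_eq_C h0]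
  congr 1
  rw [coeff_pderiv]
  simp

lemma hom1_expand {q : MvPolynomial (Fin 3) ℂ} (hq : q.IsHomogeneous 1) :
    q = ∑ k : Fin 3, C (coeff (Finsupp.single k 1) q) * X k := by
  have e := euler hq
  rw [Nat.cast_one, map_one, one_mul] at e
  conv_lhs => rw [← e]
  refine Finset.sum_congr rfl fun k _ => ?_
  rw [pderiv_hom1 hq]
  ring

lemma exists_coeff1 {q : MvPolynomial (Fin 3) ℂ} (hq : q.IsHomogeneous 1) (hq0 : q ≠ 0) :
    ∃ k : Fin 3, coeff (Finsupp.single k 1) q ≠ 0 ∧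
      pderiv k q = C (coeff (Finsupp.single k 1) q) := by
  by_contra hall
  push_neg at hall
  apply hq0
  rw [hom1_expand hq]
  apply Finset.sum_eq_zero
  intro k _
  by_cases hk : coeff (Finsupp.single k 1) q = 0
  · rw [hk, map_zero, zero_mul]
  · exact absurd (pderiv_hom1 hq k) (hall k hk)

lemma X_dvd_sub_aeval (i : Fin 3) (f : MvPolynomial (Fin 3) ℂ) :
    X i ∣ f - aeval (Function.update (X : Fin 3 → MvPolynomial (Fin 3) ℂ) i 0) f := by
  induction f using MvPolynomial.induction_on' with
  | add p q hp hq =>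
    rw [map_add]
    have := dvd_add hp hq
    convert this using 1
    ring
  | monomial u a =>
    rw [aeval_monomial]
    by_cases hui : u i = 0
    · have hprod : (u.prod fun k e => Function.update X i 0 k ^ e)
          = u.prod fun k e => (X k : MvPolynomial (Fin 3) ℂ) ^ e := by
        apply Finsupp.prod_congr
        intro k hk
        congr 1
        apply Function.update_of_ne
        rintro rfl
        exact (Finsupp.mem_support_iff.mp hk) hui
      rw [hprod, algebraMap_eq, ← monomial_eq]
      simp
    · have hzero : (u.prod fun k e => Function.update (X : Fin 3 → MvPolynomial (Fin 3) ℂ) i 0 k ^ e) = 0 := by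
        rw [Finsupp.prod]
        apply Finset.prod_eq_zero (Finsupp.mem_support_iff.mpr hui)
        rw [Function.update_self]
        exact zero_pow hui
      rw [hzero, mul_zero, sub_zero]
      exact X_dvd_monomial.mpr (Or.inr hui)

lemma X_dvd_of_aeval_zero (i : Fin 3) (f : MvPolynomial (Fin 3) ℂ)
    (hf : aeval (Function.update (X : Fin 3 → MvPolynomial (Fin 3) ℂ) i 0) f = 0) : X i ∣ f := by
  have := X_dvd_sub_aeval i f
  rwa [hf, sub_zero] at this

lemma X_dvd_or (i : Fin 3) (a b : MvPolynomial (Fin 3) ℂ) (hd : X i ∣ a * b) :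
    X i ∣ a ∨ X i ∣ b := by
  obtain ⟨g, hg⟩ := hd
  have h0 : aeval (Function.update (X : Fin 3 → MvPolynomial (Fin 3) ℂ) i 0) a
      * aeval (Function.update (X : Fin 3 → MvPolynomial (Fin 3) ℂ) i 0) b = 0 := by
    rw [← map_mul, hg, map_mul, aeval_X, Function.update_self, zero_mul]
  rcases mul_eq_zero.mp h0 with h | h
  · exact Or.inl (X_dvd_of_aeval_zero _ _ h)
  · exact Or.inr (X_dvd_of_aeval_zero _ _ h)

lemma aeval_update_linear {h : MvPolynomial (Fin 3) ℂ} (hh : h.IsHomogeneous 1) (j₀ : Fin 3)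
    (v : MvPolynomial (Fin 3) ℂ) :
    aeval (Function.update X j₀ v) h
      = h + C (coeff (Finsupp.single j₀ 1) h) * (v - X j₀) := by
  conv_lhs => rw [hom1_expand hh]
  rw [map_sum]
  have hterm : ∀ k : Fin 3,
      aeval (Function.update X j₀ v) (C (coeff (Finsupp.single k 1) h) * X k)
      = C (coeff (Finsupp.single k 1) h) * X k
        + (if k = j₀ then C (coeff (Finsupp.single j₀ 1) h) * (v - X j₀) else 0) := by
    intro k
    rw [map_mul, aeval_X, aeval_C, algebraMap_eq]
    by_cases hk : k = j₀
    · subst hk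
      rw [Function.update_self, if_pos rfl]
      ring
    · rw [Function.update_of_ne hk, if_neg hk, add_zero]
  rw [Finset.sum_congr rfl (fun k _ => hterm k), Finset.sum_add_distrib,
    Finset.sum_ite_eq' Finset.univ j₀, if_pos (Finset.mem_univ _), ← hom1_expand hh]

lemma h_dvd_of_dvd_sq {h s : MvPolynomial (Fin 3) ℂ} (hhom : h.IsHomogeneous 1) (hh : h ≠ 0)
    (hd : h ∣ s * s) : h ∣ s := by
  obtain ⟨j₀, hc, hpd⟩ := exists_coeff1 hhom hh
  set c := coeff (Finsupp.single j₀ 1) h with hcdef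
  have hcc : C c * C c⁻¹ = (1 : MvPolynomial (Fin 3) ℂ) := by
    rw [← C_mul, mul_inv_cancel₀ hc, C_1]
  let u : Fin 3 → MvPolynomial (Fin 3) ℂ :=
    Function.update X j₀ (C c⁻¹ * (X j₀ - (h - C c * X j₀)))
  let w : Fin 3 → MvPolynomial (Fin 3) ℂ := Function.update X j₀ h
  have huj : u j₀ = C c⁻¹ * (X j₀ - (h - C c * X j₀)) := Function.update_self _ _ _
  have hun : ∀ k, k ≠ j₀ → u k = X k := fun k hk => Function.update_of_ne hk _ _
  have hwj : w j₀ = h := Function.update_self _ _ _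
  have hwn : ∀ k, k ≠ j₀ → w k = X k := fun k hk => Function.update_of_ne hk _ _
  have hu_h : aeval u h = X j₀ := by
    rw [show u = Function.update X j₀ (C c⁻¹ * (X j₀ - (h - C c * X j₀))) from rfl,
      aeval_update_linear hhom, ← hcdef]
    linear_combination (X j₀ - (h - C c * X j₀)) * hcc
  have hw_h : aeval w h = h + C c * (h - X j₀) := by
    rw [show w = Function.update X j₀ h from rfl, aeval_update_linear hhom, ← hcdef]
  have hw_u : ∀ f, aeval w (aeval u f) = f := by
    intro f
    have hcomp : (aeval w).comp (aeval u) = (AlgHom.id ℂ (MvPolynomial (Fin 3) ℂ)) := by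
      apply MvPolynomial.algHom_ext
      intro k
      rw [AlgHom.comp_apply, aeval_X, AlgHom.id_apply]
      by_cases hk : k = j₀
      · subst hk
        have haC : ∀ z : ℂ, aeval w (C z) = C z := fun z => by
          rw [aeval_C, algebraMap_eq]
        rw [huj, map_mul, map_sub, map_sub, map_mul, aeval_X, hwj, hw_h, haC, haC]
        linear_combination (X k) * hcc
      · rw [hun k hk, aeval_X, hwn k hk]
    have := AlgHom.congr_fun hcomp f
    simpa using this
  obtain ⟨t, ht⟩ := hd
  have hXdvd : X j₀ ∣ aeval u s * aeval u s := by
    rw [← map_mul, ht, map_mul, hu_h]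
    exact Dvd.intro _ rfl
  have hxs : X j₀ ∣ aeval u s := (X_dvd_or _ _ _ hXdvd).elim id id
  obtain ⟨g, hg⟩ := hxs
  refine ⟨aeval w g, ?_⟩
  calc s = aeval w (aeval u s) := (hw_u s).symm
    _ = aeval w (X j₀ * g) := by rw [hg]
    _ = h * aeval w g := by rw [map_mul, aeval_X, hwj]

lemma jacMinor_homog {f g : MvPolynomial (Fin 3) ℂ} {m n r : ℕ}
    (hf : f.IsHomogeneous m) (hg : g.IsHomogeneous n) (hm : 1 ≤ m) (hn : 1 ≤ n)
    (hr : m + n = r + 2) (i j : Fin 3) : (jacMinor f g i j).IsHomogeneous r := by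
  have h1 := (pderiv_isHomogeneous hf i).mul (pderiv_isHomogeneous hg j)
  have h2 := (pderiv_isHomogeneous hf j).mul (pderiv_isHomogeneous hg i)
  rw [show m - 1 + (n - 1) = r by omega] at h1 h2
  exact h1.sub h2

lemma cofactor_homog {h f : MvPolynomial (Fin 3) ℂ} {n : ℕ} (hh1 : h.IsHomogeneous 1)
    (hh : h ≠ 0) (hf : (h * f).IsHomogeneous (n + 1)) : f.IsHomogeneous n := by
  have hzero : ∀ d, d ≠ n → homogeneousComponent d f = 0 := by
    intro d hd
    have h1 : homogeneousComponent (d + 1) (h * f) = 0 := by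
      rw [homogeneousComponent_of_mem ((mem_homogeneousSubmodule _ _).mpr hf),
        if_neg (show ¬(d + 1 = n + 1) by omega)]
    have h2 : homogeneousComponent (d + 1) (h * f) = h * homogeneousComponent d f := by
      conv_lhs => rw [← sum_homogeneousComponent f, Finset.mul_sum, map_sum]
      have hterm : ∀ e ∈ Finset.range (f.totalDegree + 1),
          homogeneousComponent (d + 1) (h * homogeneousComponent e f)
          = if e = d then h * homogeneousComponent e f else 0 := by
        intro e _
        have hmem : (h * homogeneousComponent e f).IsHomogeneous (1 + e) :=
          hh1.mul (homogeneousComponent_isHomogeneous e f)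
        rw [homogeneousComponent_of_mem ((mem_homogeneousSubmodule _ _).mpr hmem)]
        by_cases he : e = d
        · rw [if_pos (show d + 1 = 1 + e by omega), if_pos he]
        · rw [if_neg (show ¬(d + 1 = 1 + e) by omega), if_neg he]
      rw [Finset.sum_congr rfl hterm, Finset.sum_ite_eq' (Finset.range (f.totalDegree + 1)) d]
      by_cases hdr : d ∈ Finset.range (f.totalDegree + 1)
      · rw [if_pos hdr]
      · rw [if_neg hdr, homogeneousComponent_eq_zero d f (by simpa [Finset.mem_range] using hdr),
          mul_zero]
    rw [h1] at h2
    rcases mul_eq_zero.mp h2.symm with h3 | h3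
    · exact absurd h3 hh
    · exact h3
  have hfc : f = homogeneousComponent n f := by
    conv_lhs => rw [← sum_homogeneousComponent f]
    exact Finset.sum_eq_single n (fun e _ he => hzero e he)
      (fun hn' => homogeneousComponent_eq_zero n f (by simpa [Finset.mem_range] using hn'))
  rw [hfc]
  exact homogeneousComponent_isHomogeneous n f

lemma eq_C_mul_pow {h : MvPolynomial (Fin 3) ℂ} (hh1 : h.IsHomogeneous 1) (hh : h ≠ 0) :
    ∀ (n : ℕ) (Q : MvPolynomial (Fin 3) ℂ), Q.IsHomogeneous n →
      (∀ i j, pderiv i h * pderiv j Q = pderiv j h * pderiv i Q) →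
      ∃ a : ℂ, Q = C a * h ^ n := by
  intro n
  induction n with
  | zero =>
    intro Q hQ _
    exact ⟨coeff 0 Q, by rw [pow_zero, mul_one]; exact homog_zero_eq_C hQ⟩
  | succ n ih =>
    intro Q hQ hmin
    obtain ⟨j₀, hcne, hpd⟩ := exists_coeff1 hh1 hh
    set c := coeff (Finsupp.single j₀ 1) h with hcdef
    have hR : (pderiv j₀ Q).IsHomogeneous n := by
      have := pderiv_isHomogeneous hQ j₀
      simpa using this
    have hminR : ∀ i j, pderiv i h * pderiv j (pderiv j₀ Q)
        = pderiv j h * pderiv i (pderiv j₀ Q) := by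
      intro i j
      have hstep := congrArg (pderiv j₀) (hmin i j)
      rw [pderiv_hom1 hh1 i, pderiv_hom1 hh1 j, pderiv_C_mul, pderiv_C_mul] at hstep
      rw [pderiv_hom1 hh1 i, pderiv_hom1 hh1 j, mypderiv_comm j j₀, mypderiv_comm i j₀]
      exact hstep
    obtain ⟨b, hb⟩ := ih (pderiv j₀ Q) hR hminR
    have he := euler hQ
    have he1 := euler hh1
    rw [Nat.cast_one, map_one, one_mul] at he1
    have key : C c * (C ((n + 1 : ℕ) : ℂ) * Q) = h * (C b * h ^ n) := by
      calc C c * (C ((n + 1 : ℕ) : ℂ) * Q) = C c * ∑ k : Fin 3, X k * pderiv k Q := by rw [he]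
        _ = ∑ k : Fin 3, X k * (C c * pderiv k Q) := by
            rw [Finset.mul_sum]; exact Finset.sum_congr rfl fun k _ => by ring
        _ = ∑ k : Fin 3, X k * (pderiv k h * pderiv j₀ Q) := by
            refine Finset.sum_congr rfl fun k _ => ?_
            rw [← hpd, hmin j₀ k]
        _ = (∑ k : Fin 3, X k * pderiv k h) * pderiv j₀ Q := by
            rw [Finset.sum_mul]; exact Finset.sum_congr rfl fun k _ => by ring
        _ = h * (C b * h ^ n) := by rw [he1, hb]
    have hx : (c * ((n + 1 : ℕ) : ℂ)) ≠ 0 :=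
      mul_ne_zero hcne (Nat.cast_ne_zero.mpr n.succ_ne_zero)
    refine ⟨(c * ((n + 1 : ℕ) : ℂ))⁻¹ * b, ?_⟩
    apply mul_left_cancel₀ (show (C (c * ((n + 1 : ℕ) : ℂ)) : MvPolynomial (Fin 3) ℂ) ≠ 0 from
      fun hC => hx (C_injective (Fin 3) ℂ (hC.trans (map_zero C).symm)))
    calc C (c * ((n + 1 : ℕ) : ℂ)) * Q = C c * (C ((n + 1 : ℕ) : ℂ) * Q) := by
          rw [C_mul]; ring
      _ = h * (C b * h ^ n) := key
      _ = C (c * ((n + 1 : ℕ) : ℂ)) * (C ((c * ((n + 1 : ℕ) : ℂ))⁻¹ * b) * h ^ (n + 1)) := by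
          have hCC : C (c * ((n + 1 : ℕ) : ℂ)) * C ((c * ((n + 1 : ℕ) : ℂ))⁻¹ * b)
              = (C b : MvPolynomial (Fin 3) ℂ) := by
            rw [← C_mul]
            congr 1
            rw [← mul_assoc, mul_inv_cancel₀ hx, one_mul]
          linear_combination (-(h ^ (n + 1))) * hCC

theorem stmt11 (F2 F3 F4 G2 G3 G4 G5 G6 h : MvPolynomial (Fin 3) ℂ) (α β : ℂ)
    (hF2 : F2.IsHomogeneous 2) (hF3 : F3.IsHomogeneous 3) (hF4 : F4.IsHomogeneous 4)
    (hG2 : G2.IsHomogeneous 2) (hG3 : G3.IsHomogeneous 3) (hG4 : G4.IsHomogeneous 4)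
    (hG5 : G5.IsHomogeneous 5) (hG6 : G6.IsHomogeneous 6)
    (hh : h ≠ 0) (hhhom : h.IsHomogeneous 1) (hα : α ≠ 0)
    (hF4eq : F4 = h ^ 4) (hG6eq : G6 = C α * h ^ 6)
    (hG5eq : G5 = C ((3 / 2) * α) * h ^ 2 * F3 + C β * h ^ 5)
    (hbr : ∀ i j : Fin 3, (jacMinor (X 0 + F2 + F3 + F4) (X 2 + G2 + G3 + G4 + G5 + G6) i j).totalDegree < 6) :
    ∃ (F2t : MvPolynomial (Fin 3) ℂ) (a : ℂ), F2t.IsHomogeneous 2 ∧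
      F3 = h * F2t ∧
      G5 = C ((3 / 2) * α) * h ^ 3 * F2t + C β * h ^ 5 ∧
      G4 = C ((3 / 8) * α) * F2t ^ 2 + C ((5 / 4) * β) * h ^ 2 * F2t
        + C ((3 / 2) * α) * h ^ 2 * F2 + C ((1 / 4) * a) * h ^ 4 := by
  -- constant relations
  have r1 : (C ((3/2)*α) : MvPolynomial (Fin 3) ℂ) * 2 = C α * 3 := by
    rw [← map_ofNat (C : ℂ →+* MvPolynomial (Fin 3) ℂ) 2,
      ← map_ofNat (C : ℂ →+* MvPolynomial (Fin 3) ℂ) 3, ← C_mul, ← C_mul]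
    congr 1; ring
  have r2 : (C ((3/8)*α) : MvPolynomial (Fin 3) ℂ) * 8 = C α * 3 := by
    rw [← map_ofNat (C : ℂ →+* MvPolynomial (Fin 3) ℂ) 8,
      ← map_ofNat (C : ℂ →+* MvPolynomial (Fin 3) ℂ) 3, ← C_mul, ← C_mul]
    congr 1; ring
  have r3 : (C ((5/4)*β) : MvPolynomial (Fin 3) ℂ) * 4 = C β * 5 := by
    rw [← map_ofNat (C : ℂ →+* MvPolynomial (Fin 3) ℂ) 4,
      ← map_ofNat (C : ℂ →+* MvPolynomial (Fin 3) ℂ) 5, ← C_mul, ← C_mul]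
    congr 1; ring
  have r4 : (C (3*α) : MvPolynomial (Fin 3) ℂ) = C α * 3 := by
    rw [← map_ofNat (C : ℂ →+* MvPolynomial (Fin 3) ℂ) 3, ← C_mul]
    congr 1; ring
  have hdvd_of_Cmul : ∀ (z : ℂ) (p : MvPolynomial (Fin 3) ℂ), z ≠ 0 →
      h ∣ C z * p → h ∣ p := by
    intro z p hz ⟨V, hV⟩
    refine ⟨C z⁻¹ * V, ?_⟩
    have hone : (C z⁻¹ : MvPolynomial (Fin 3) ℂ) * C z = 1 := by
      rw [← C_mul, inv_mul_cancel₀ hz, C_1]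
    calc p = (C z⁻¹ * C z) * p := by rw [hone, one_mul]
      _ = C z⁻¹ * (C z * p) := by ring
      _ = C z⁻¹ * (h * V) := by rw [hV]
      _ = h * (C z⁻¹ * V) := by ring
  -- extract the degree 6 component
  have E : ∀ i j : Fin 3, jacMinor F2 G6 i j + jacMinor F3 G5 i j + jacMinor F4 G4 i j = 0 := by
    intro i j
    have h78a : jacMinor F4 G6 i j = 0 := by
      rw [hF4eq, hG6eq]
      simp only [jacMinor, pderiv_C_mul, pderiv_pow, pderiv_C]
      push_cast
      ring
    have h78b : jacMinor F3 G6 i j + jacMinor F4 G5 i j = 0 := by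
      rw [hF4eq, hG6eq, hG5eq]
      simp only [jacMinor, map_add, pderiv_mul, pderiv_pow, pderiv_C_mul, pderiv_C]
      push_cast
      linear_combination (-2 * h^5 *
        (pderiv i F3 * pderiv j h - pderiv j F3 * pderiv i h)) * r1
    have hdec : jacMinor (X 0 + F2 + F3 + F4) (X 2 + G2 + G3 + G4 + G5 + G6) i j
        = (jacMinor F2 G6 i j + jacMinor F3 G5 i j + jacMinor F4 G4 i j)
          + jacMinor F4 G6 i j
          + (jacMinor F3 G6 i j + jacMinor F4 G5 i j)
          + (jacMinor (X 0) (X 2) i j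
            + (jacMinor (X 0) G2 i j + jacMinor F2 (X 2) i j)
            + (jacMinor (X 0) G3 i j + jacMinor F2 G2 i j + jacMinor F3 (X 2) i j)
            + (jacMinor (X 0) G4 i j + jacMinor F2 G3 i j + jacMinor F3 G2 i j
                + jacMinor F4 (X 2) i j)
            + (jacMinor (X 0) G5 i j + jacMinor F2 G4 i j + jacMinor F3 G3 i j
                + jacMinor F4 G2 i j)
            + (jacMinor (X 0) G6 i j + jacMinor F2 G5 i j + jacMinor F3 G4 i j
                + jacMinor F4 G3 i j)) := by
      simp only [jacMinor, map_add]
      ring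
    have hcomp0 : homogeneousComponent 6
        (jacMinor (X 0 + F2 + F3 + F4) (X 2 + G2 + G3 + G4 + G5 + G6) i j) = 0 :=
      homogeneousComponent_eq_zero 6 _ (hbr i j)
    rw [hdec, h78a, h78b, add_zero, add_zero] at hcomp0
    have z : ∀ (f g : MvPolynomial (Fin 3) ℂ) (m nn : ℕ), f.IsHomogeneous m →
        g.IsHomogeneous nn → 1 ≤ m → 1 ≤ nn → m + nn ≠ 8 →
        homogeneousComponent 6 (jacMinor f g i j) = 0 := by
      intro f g m nn hf hg hm hnn hne
      rw [homogeneousComponent_of_mem ((mem_homogeneousSubmodule _ _).mpr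
        (jacMinor_homog hf hg hm hnn (show m + nn = (m + nn - 2) + 2 by omega) i j))]
      rw [if_neg (show ¬(6 = m + nn - 2) by omega)]
    have slf : ∀ (f g : MvPolynomial (Fin 3) ℂ) (m nn : ℕ), f.IsHomogeneous m →
        g.IsHomogeneous nn → 1 ≤ m → 1 ≤ nn → m + nn = 8 →
        homogeneousComponent 6 (jacMinor f g i j) = jacMinor f g i j := by
      intro f g m nn hf hg hm hnn he
      rw [homogeneousComponent_of_mem ((mem_homogeneousSubmodule _ _).mpr
        (jacMinor_homog hf hg hm hnn (show m + nn = 6 + 2 by omega) i j)), if_pos rfl]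
    have hX0 : (X 0 : MvPolynomial (Fin 3) ℂ).IsHomogeneous 1 := isHomogeneous_X ℂ 0
    have hX2 : (X 2 : MvPolynomial (Fin 3) ℂ).IsHomogeneous 1 := isHomogeneous_X ℂ 2
    simp only [map_add] at hcomp0
    rw [slf F2 G6 2 6 hF2 hG6 (by norm_num) (by norm_num) (by norm_num),
      slf F3 G5 3 5 hF3 hG5 (by norm_num) (by norm_num) (by norm_num),
      slf F4 G4 4 4 hF4 hG4 (by norm_num) (by norm_num) (by norm_num),
      z _ _ 1 1 hX0 hX2 (by norm_num) (by norm_num) (by norm_num),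
      z _ _ 1 2 hX0 hG2 (by norm_num) (by norm_num) (by norm_num),
      z _ _ 2 1 hF2 hX2 (by norm_num) (by norm_num) (by norm_num),
      z _ _ 1 3 hX0 hG3 (by norm_num) (by norm_num) (by norm_num),
      z _ _ 2 2 hF2 hG2 (by norm_num) (by norm_num) (by norm_num),
      z _ _ 3 1 hF3 hX2 (by norm_num) (by norm_num) (by norm_num),
      z _ _ 1 4 hX0 hG4 (by norm_num) (by norm_num) (by norm_num),
      z _ _ 2 3 hF2 hG3 (by norm_num) (by norm_num) (by norm_num),
      z _ _ 3 2 hF3 hG2 (by norm_num) (by norm_num) (by norm_num),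
      z _ _ 4 1 hF4 hX2 (by norm_num) (by norm_num) (by norm_num),
      z _ _ 1 5 hX0 hG5 (by norm_num) (by norm_num) (by norm_num),
      z _ _ 2 4 hF2 hG4 (by norm_num) (by norm_num) (by norm_num),
      z _ _ 3 3 hF3 hG3 (by norm_num) (by norm_num) (by norm_num),
      z _ _ 4 2 hF4 hG2 (by norm_num) (by norm_num) (by norm_num),
      z _ _ 1 6 hX0 hG6 (by norm_num) (by norm_num) (by norm_num),
      z _ _ 2 5 hF2 hG5 (by norm_num) (by norm_num) (by norm_num),
      z _ _ 3 4 hF3 hG4 (by norm_num) (by norm_num) (by norm_num),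
      z _ _ 4 3 hF4 hG3 (by norm_num) (by norm_num) (by norm_num)] at hcomp0
    simpa using hcomp0
  -- stage A: h divides F3
  have hS' : ∀ i j : Fin 3, C ((3/2)*α) * 2 * (F3 * jacMinor F3 h i j)
      + h * (C α * 6 * h^3 * jacMinor F2 h i j + C β * 5 * h^2 * jacMinor F3 h i j
        + 4 * h * jacMinor h G4 i j) = 0 := by
    intro i j
    have hE := E i j
    rw [hG6eq, hG5eq, hF4eq] at hE
    have hfac : h * (C ((3/2)*α) * 2 * (F3 * jacMinor F3 h i j)
        + h * (C α * 6 * h^3 * jacMinor F2 h i j + C β * 5 * h^2 * jacMinor F3 h i j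
          + 4 * h * jacMinor h G4 i j)) = 0 := by
      rw [← hE]
      simp only [jacMinor, map_add, pderiv_mul, pderiv_pow, pderiv_C_mul, pderiv_C]
      push_cast
      ring
    rcases mul_eq_zero.mp hfac with h0 | h0
    · exact absurd h0 hh
    · exact h0
  have hFBdvd : ∀ i j : Fin 3, h ∣ F3 * jacMinor F3 h i j := by
    intro i j
    apply hdvd_of_Cmul (3*α) _ (by simpa using hα)
    refine ⟨-(C α * 6 * h^3 * jacMinor F2 h i j + C β * 5 * h^2 * jacMinor F3 h i j
      + 4 * h * jacMinor h G4 i j), ?_⟩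
    linear_combination (hS' i j) + (F3 * jacMinor F3 h i j) * r4
      - (F3 * jacMinor F3 h i j) * r1
  obtain ⟨j₀, hc, hpd⟩ := exists_coeff1 hhhom hh
  set c := coeff (Finsupp.single j₀ 1) h with hcdef
  have hsum1 : ∑ i : Fin 3, X i * (F3 * jacMinor F3 h i j₀)
      = C 3 * pderiv j₀ h * F3^2 - h * (F3 * pderiv j₀ F3) := by
    have e3 := euler hF3
    have e1 := euler hhhom
    rw [Nat.cast_one, map_one, one_mul] at e1
    calc ∑ i : Fin 3, X i * (F3 * jacMinor F3 h i j₀)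
        = F3 * pderiv j₀ h * (∑ i : Fin 3, X i * pderiv i F3)
          - F3 * pderiv j₀ F3 * (∑ i : Fin 3, X i * pderiv i h) := by
          rw [Finset.mul_sum, Finset.mul_sum, ← Finset.sum_sub_distrib]
          refine Finset.sum_congr rfl fun i _ => ?_
          simp only [jacMinor]; ring
      _ = C 3 * pderiv j₀ h * F3^2 - h * (F3 * pderiv j₀ F3) := by
          rw [e3, e1]; push_cast; ring
  have hdvdsum : h ∣ ∑ i : Fin 3, X i * (F3 * jacMinor F3 h i j₀) :=
    Finset.dvd_sum fun i _ => (hFBdvd i j₀).mul_left (X i)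
  have hdvd3 : h ∣ C 3 * C c * F3 ^ 2 := by
    have heq : C 3 * C c * F3 ^ 2
        = (∑ i : Fin 3, X i * (F3 * jacMinor F3 h i j₀)) + h * (F3 * pderiv j₀ F3) := by
      rw [hsum1, hpd]; ring
    rw [heq]
    exact dvd_add hdvdsum (dvd_mul_right h _)
  have hdvdF3sq : h ∣ F3 * F3 := by
    apply hdvd_of_Cmul (3*c) _ (mul_ne_zero (by norm_num) hc)
    have heq2 : (C ((3:ℂ)*c) : MvPolynomial (Fin 3) ℂ) * (F3*F3) = C 3 * C c * F3^2 := by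
      rw [C_mul]; ring
    rw [heq2]
    exact hdvd3
  obtain ⟨F2t, hF3eq'⟩ := h_dvd_of_dvd_sq hhhom hh hdvdF3sq
  have hF2t : F2t.IsHomogeneous 2 :=
    cofactor_homog hhhom hh (show (h*F2t).IsHomogeneous (2+1) by rw [← hF3eq']; exact hF3)
  -- stage C
  set Q : MvPolynomial (Fin 3) ℂ := G4 - C ((3/8)*α) * F2t^2 - C ((5/4)*β) * (h^2 * F2t)
    - C ((3/2)*α) * (h^2 * F2) with hQdef
  have hQhom : Q.IsHomogeneous 4 := by
    have h1 : (C ((3/8)*α) * F2t^2).IsHomogeneous 4 := by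
      simpa using (hF2t.pow 2).C_mul ((3/8)*α)
    have h2 : (C ((5/4)*β) * (h^2 * F2t)).IsHomogeneous 4 := by
      simpa using ((hhhom.pow 2).mul hF2t).C_mul ((5/4)*β)
    have h3 : (C ((3/2)*α) * (h^2 * F2)).IsHomogeneous 4 := by
      simpa using ((hhhom.pow 2).mul hF2).C_mul ((3/2)*α)
    exact ((hG4.sub h1).sub h2).sub h3
  have h4ne : (4 : MvPolynomial (Fin 3) ℂ) ≠ 0 := by
    rw [← map_ofNat (C : ℂ →+* MvPolynomial (Fin 3) ℂ) 4]
    exact fun hC => (by norm_num : (4:ℂ) ≠ 0) (C_injective (Fin 3) ℂ (hC.trans (map_zero C).symm))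
  have hQmin : ∀ i j : Fin 3, pderiv i h * pderiv j Q = pderiv j h * pderiv i Q := by
    intro i j
    have hE := E i j
    rw [hG6eq, hG5eq, hF4eq, hF3eq'] at hE
    simp only [jacMinor, map_add, pderiv_mul, pderiv_pow, pderiv_C_mul, pderiv_C] at hE
    have hfac : h^3 * ((pderiv i h * pderiv j Q - pderiv j h * pderiv i Q) * 4) = 0 := by
      rw [hQdef]
      simp only [map_sub, pderiv_mul, pderiv_pow, pderiv_C_mul, pderiv_C]
      push_cast at hE ⊢
      linear_combination hE
        + (h^3 * F2t * (pderiv i F2t * pderiv j h - pderiv j F2t * pderiv i h)) * r2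
        + (2 * h^5 * (pderiv i F2 * pderiv j h - pderiv j F2 * pderiv i h)
           - h^3 * F2t * (pderiv i F2t * pderiv j h - pderiv j F2t * pderiv i h)) * r1
        + (h^5 * (pderiv i F2t * pderiv j h - pderiv j F2t * pderiv i h)) * r3
    rcases mul_eq_zero.mp hfac with h0 | h0
    · exact absurd h0 (pow_ne_zero 3 hh)
    rcases mul_eq_zero.mp h0 with h0 | h0
    · exact sub_eq_zero.mp h0
    · exact absurd h0 h4ne
  obtain ⟨a', hQeq⟩ := eq_C_mul_pow hhhom hh 4 Q hQhom hQmin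
  refine ⟨F2t, 4*a', hF2t, hF3eq', ?_, ?_⟩
  · rw [hG5eq, hF3eq']; ring
  · rw [show ((1:ℂ)/4)*(4*a') = a' from by ring]
    rw [hQdef] at hQeq
    linear_combination hQeq
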